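/- The sharp transformation exchanging dissipation parameters μ and 2−μ: Let μ ∈ ℝ and let v : (0,∞)×ℝ → ℝ be twice continuously differentiable. Define v♯(t,x) = t^{μ−1} v(t,x). Then v satisfies ∂ₜ²v − ∂ₓ²v + (μ/t)∂ₜv = 0 on (0,∞)×ℝ if and only if v♯ satisfies ∂ₜ²v♯ − ∂ₓ²v♯ + ((2−μ)/t)∂ₜv♯ = 0 on (0,∞)×ℝ. Moreover, if s > 0 and v(s,·) ≡ 0 with ∂ₜv(s,·) = v₁, then v♯(s,·) ≡ 0 and ∂ₜv♯(s,·) = s^{μ−1} v₁. -/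
import Mathlib


/-!
STATEMENT 15: The transformation `v♯(t,x) = t^{μ−1} v(t,x)` exchanges
dissipation parameters `μ` and `2−μ` for the linear EPD equation.
-/

open Real Set

private lemma rpow_shift (μ t : ℝ) (ht : 0 < t) : t ^ (μ-2) * t = t ^ (μ-1) := by
  rw [← Real.rpow_add_one ht.ne']; ring_nf

private lemma hasDerivAt_rpow' (μ t : ℝ) (ht : t ≠ 0) :
    HasDerivAt (fun x : ℝ => x ^ (μ-1)) ((μ-1) * t ^ (μ-2)) t := by
  have := Real.hasDerivAt_rpow_const (p := μ-1) (Or.inl ht)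
  convert this using 2; ring_nf

theorem epd_key (μ : ℝ) (v : ℝ → ℝ → ℝ)
    (hv : ContDiffOn ℝ 2 (fun z : ℝ × ℝ => v z.1 z.2) (Ioi 0 ×ˢ univ))
    (t : ℝ) (ht : 0 < t) (x : ℝ) :
    iteratedDeriv 2 (fun τ => τ ^ (μ - 1) * v τ x) t
      - iteratedDeriv 2 (fun y => t ^ (μ - 1) * v t y) x
      + (2 - μ) / t * deriv (fun τ => τ ^ (μ - 1) * v τ x) t
    = t ^ (μ - 1) * (iteratedDeriv 2 (fun τ => v τ x) t
      - iteratedDeriv 2 (fun y => v t y) x + μ / t * deriv (fun τ => v τ x) t) := by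
  set f : ℝ → ℝ := fun τ => v τ x with hfdef
  have hf : ContDiffOn ℝ 2 f (Ioi 0) := by
    have h1 : ContDiff ℝ 2 (fun τ : ℝ => (τ, x)) := contDiff_id.prodMk contDiff_const
    exact hv.comp h1.contDiffOn (fun τ hτ => ⟨hτ, mem_univ x⟩)
  have hg : ContDiff ℝ 2 (fun y => v t y) := by
    rw [← contDiffOn_univ]
    have h1 : ContDiff ℝ 2 (fun y : ℝ => (t, y)) := contDiff_const.prodMk contDiff_id
    exact hv.comp h1.contDiffOn (fun y _ => ⟨ht, mem_univ y⟩)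
  have hfd : ∀ τ ∈ Ioi (0:ℝ), DifferentiableAt ℝ f τ := fun τ hτ =>
    ((hf.differentiableOn (by norm_num)).differentiableAt (isOpen_Ioi.mem_nhds hτ))
  have hf1 : ContDiffOn ℝ 1 (deriv f) (Ioi 0) :=
    hf.deriv_of_isOpen isOpen_Ioi (by norm_num)
  have hfd' : DifferentiableAt ℝ (deriv f) t :=
    (hf1.differentiableOn (by norm_num)).differentiableAt (isOpen_Ioi.mem_nhds ht)
  -- first derivative formula
  have stepA : ∀ τ ∈ Ioi (0:ℝ), HasDerivAt (fun σ => σ ^ (μ-1) * f σ)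
      ((μ-1) * τ ^ (μ-2) * f τ + τ ^ (μ-1) * deriv f τ) τ := fun τ hτ =>
    (hasDerivAt_rpow' μ τ (ne_of_gt hτ)).mul (hfd τ hτ).hasDerivAt
  have hderiv1 : deriv (fun τ => τ ^ (μ-1) * v τ x) t
      = (μ-1) * t ^ (μ-2) * f t + t ^ (μ-1) * deriv f t := (stepA t ht).deriv
  -- second derivative
  have heq : (fun τ => deriv (fun σ => σ ^ (μ-1) * v σ x) τ) =ᶠ[nhds t]
      (fun τ => (μ-1) * τ ^ (μ-2) * f τ + τ ^ (μ-1) * deriv f τ) := by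
    filter_upwards [isOpen_Ioi.mem_nhds ht] with τ hτ using (stepA τ hτ).deriv
  have hG : HasDerivAt (fun τ => (μ-1) * τ ^ (μ-2) * f τ + τ ^ (μ-1) * deriv f τ)
      (((μ-1) * ((μ-2) * t ^ (μ-3)) * f t + (μ-1) * t ^ (μ-2) * deriv f t)
        + ((μ-1) * t ^ (μ-2) * deriv f t + t ^ (μ-1) * deriv (deriv f) t)) t := by
    have h1 : HasDerivAt (fun τ : ℝ => (μ-1) * τ ^ (μ-2)) ((μ-1) * ((μ-2) * t ^ (μ-3))) t := by
      have := hasDerivAt_rpow' (μ-1) t ht.ne'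
      have h2 : (μ-1-1) = μ-2 := by ring
      have h3 : (μ-1-2) = μ-3 := by ring
      rw [h2, h3] at this
      exact this.const_mul (μ-1)
    exact (h1.mul (hfd t ht).hasDerivAt).add ((hasDerivAt_rpow' μ t ht.ne').mul hfd'.hasDerivAt)
  have hderiv2 : iteratedDeriv 2 (fun τ => τ ^ (μ-1) * v τ x) t
      = ((μ-1) * ((μ-2) * t ^ (μ-3)) * f t + (μ-1) * t ^ (μ-2) * deriv f t)
        + ((μ-1) * t ^ (μ-2) * deriv f t + t ^ (μ-1) * deriv (deriv f) t) := by
    rw [iteratedDeriv_succ, iteratedDeriv_one, heq.deriv_eq, hG.deriv]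
  have hgd : Differentiable ℝ (fun y => v t y) := hg.differentiable (by norm_num)
  have hg1 : ContDiffOn ℝ 1 (deriv (fun y => v t y)) univ :=
    (contDiffOn_univ.mpr hg).deriv_of_isOpen isOpen_univ (by norm_num)
  have hgd' : Differentiable ℝ (deriv (fun y => v t y)) :=
    differentiableOn_univ.mp (hg1.differentiableOn (by norm_num))
  have hx2 : iteratedDeriv 2 (fun y => t ^ (μ-1) * v t y) x
      = t ^ (μ-1) * iteratedDeriv 2 (fun y => v t y) x := by
    rw [iteratedDeriv_succ, iteratedDeriv_one, iteratedDeriv_succ, iteratedDeriv_one]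
    have hd1 : deriv (fun y => t ^ (μ-1) * v t y)
        = fun y => t ^ (μ-1) * deriv (fun y => v t y) y :=
      funext fun y => deriv_const_mul _ (hgd y)
    rw [hd1, deriv_const_mul _ (hgd' x)]
  have hft2 : iteratedDeriv 2 f t = deriv (deriv f) t := by
    rw [iteratedDeriv_succ, iteratedDeriv_one]
  rw [hderiv2, hx2, hderiv1, hft2]
  have e2 := rpow_shift μ t ht
  have e3 := rpow_shift (μ-1) t ht
  have h3 : (μ-1-2) = μ-3 := by ring
  have h2 : (μ-1-1) = μ-2 := by ring
  rw [h3, h2] at e3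
  rw [← e2, ← e3]
  field_simp
  ring

/-- The transformation `v♯ = t^{μ−1} v` exchanges the EPD equations with
parameters `μ` and `2−μ`, and transforms the data accordingly. -/

theorem epd_sharp_transformation
    (μ : ℝ) (v : ℝ → ℝ → ℝ)
    (hv : ContDiffOn ℝ 2 (fun z : ℝ × ℝ => v z.1 z.2) (Ioi 0 ×ˢ univ))
    (vs : ℝ → ℝ → ℝ) (hvs : ∀ t x, vs t x = t ^ (μ - 1) * v t x) :
    ((∀ t > (0 : ℝ), ∀ x : ℝ,
        iteratedDeriv 2 (fun τ => v τ x) t - iteratedDeriv 2 (fun y => v t y) x +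
          μ / t * deriv (fun τ => v τ x) t = 0) ↔
      (∀ t > (0 : ℝ), ∀ x : ℝ,
        iteratedDeriv 2 (fun τ => vs τ x) t - iteratedDeriv 2 (fun y => vs t y) x +
          (2 - μ) / t * deriv (fun τ => vs τ x) t = 0)) ∧
    (∀ s > (0 : ℝ), ∀ v₁ : ℝ → ℝ,
      (∀ x : ℝ, v s x = 0) →
      (∀ x : ℝ, deriv (fun τ => v τ x) s = v₁ x) →
      (∀ x : ℝ, vs s x = 0) ∧
      (∀ x : ℝ, deriv (fun τ => vs τ x) s = s ^ (μ - 1) * v₁ x)) := by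
  have hrw : ∀ t > (0:ℝ), ∀ x : ℝ,
      iteratedDeriv 2 (fun τ => vs τ x) t - iteratedDeriv 2 (fun y => vs t y) x +
        (2 - μ) / t * deriv (fun τ => vs τ x) t
      = t ^ (μ - 1) * (iteratedDeriv 2 (fun τ => v τ x) t
          - iteratedDeriv 2 (fun y => v t y) x + μ / t * deriv (fun τ => v τ x) t) := by
    intro t ht x
    have h1 : (fun τ => vs τ x) = fun τ => τ ^ (μ - 1) * v τ x := funext fun τ => hvs τ x
    have h2 : (fun y => vs t y) = fun y => t ^ (μ - 1) * v t y := funext fun y => hvs t y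
    rw [h1, h2, epd_key μ v hv t ht x]
  constructor
  · constructor
    · intro h t ht x
      rw [hrw t ht x, h t ht x, mul_zero]
    · intro h t ht x
      have h0 := h t ht x
      rw [hrw t ht x] at h0
      rcases mul_eq_zero.mp h0 with h1 | h1
      · exact absurd h1 (Real.rpow_pos_of_pos ht _).ne'
      · exact h1
  · intro s hs v₁ h0 h1
    refine ⟨fun x => by rw [hvs, h0, mul_zero], fun x => ?_⟩
    have hfd : DifferentiableAt ℝ (fun τ => v τ x) s := by
      have hf : ContDiffOn ℝ 2 (fun τ => v τ x) (Ioi 0) := by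
        have hc : ContDiff ℝ 2 (fun τ : ℝ => (τ, x)) := contDiff_id.prodMk contDiff_const
        exact hv.comp hc.contDiffOn (fun τ hτ => ⟨hτ, mem_univ x⟩)
      exact (hf.differentiableOn (by norm_num)).differentiableAt (isOpen_Ioi.mem_nhds hs)
    have hD : HasDerivAt (fun τ => τ ^ (μ - 1) * v τ x)
        ((μ - 1) * s ^ (μ - 2) * v s x + s ^ (μ - 1) * deriv (fun τ => v τ x) s) s :=
      (hasDerivAt_rpow' μ s hs.ne').mul hfd.hasDerivAt
    have h2 : (fun τ => vs τ x) = fun τ => τ ^ (μ - 1) * v τ x := funext fun τ => hvs τ x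
    rw [h2, hD.deriv, h0 x, h1 x, mul_zero, zero_add]
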